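/- For every fixed λ > 0, the Fricke–Vogt invariant along the continuum curve of initial conditions tends to zero in the high-energy regime: I(x_λ(E), y_λ(E), z_λ(E)) → 0 as E → ∞. In other words, the curve approaches the Cayley cubic S₀ at high energies. -/

import Mathlib

open Real Filter

/-- The Fricke–Vogt invariant. -/
def frickeVogt (x y z : ℝ) : ℝ := x ^ 2 + y ^ 2 + z ^ 2 - 2 * x * y * z - 1

/-- First coordinate of the continuum curve of initial conditions. -/
noncomputable def contX (lam E : ℝ) : ℝ := cos (sqrt E)

/-- Second coordinate of the continuum curve of initial conditions. -/
noncomputable def contY (lam E : ℝ) : ℝ := cos (sqrt (E - lam))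

/-- Third coordinate of the continuum curve of initial conditions. -/
noncomputable def contZ (lam E : ℝ) : ℝ :=
  cos (sqrt E) * cos (sqrt (E - lam)) -
    (1 / 2) * (sqrt (E / (E - lam)) + sqrt ((E - lam) / E)) *
      sin (sqrt E) * sin (sqrt (E - lam))

theorem frickeVogt_tendsto_zero_highEnergy (lam : ℝ) (hlam : 0 < lam) :
    Tendsto (fun E : ℝ => frickeVogt (contX lam E) (contY lam E) (contZ lam E))
      atTop (nhds 0) := by
  -- auxiliary function h
  set h : ℝ → ℝ := fun E => lam ^ 2 / (4 * E * (E - lam)) with hh_def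
  have hE_at : Tendsto (fun E : ℝ => 4 * E * (E - lam)) atTop atTop := by
    have h1 : Tendsto (fun E : ℝ => E - lam) atTop atTop :=
      tendsto_atTop_add_const_right _ (-lam) tendsto_id
    have h2 : Tendsto (fun E : ℝ => 4 * E) atTop atTop :=
      (tendsto_id.const_mul_atTop (by norm_num))
    exact h2.atTop_mul_atTop₀ h1
  have hh : Tendsto h atTop (nhds 0) := tendsto_const_nhds.div_atTop hE_at
  have key : ∀ᶠ E in atTop,
      frickeVogt (contX lam E) (contY lam E) (contZ lam E)
        = sin (sqrt E) ^ 2 * sin (sqrt (E - lam)) ^ 2 * h E := by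
    filter_upwards [eventually_gt_atTop lam, eventually_gt_atTop 0] with E hElam hE0
    have hEl : (0:ℝ) < E - lam := by linarith
    set a := sqrt (E / (E - lam)) with ha_def
    set b := sqrt ((E - lam) / E) with hb_def
    have ha : a ^ 2 = E / (E - lam) := Real.sq_sqrt (by positivity)
    have hb : b ^ 2 = (E - lam) / E := Real.sq_sqrt (by positivity)
    have hab : a * b = 1 := by
      rw [ha_def, hb_def, ← Real.sqrt_mul (by positivity)]
      rw [show E / (E - lam) * ((E - lam) / E) = 1 by field_simp]
      exact Real.sqrt_one
    set c := cos (sqrt E)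
    set d := cos (sqrt (E - lam))
    set s := sin (sqrt E)
    set t := sin (sqrt (E - lam))
    have hs : s ^ 2 = 1 - c ^ 2 := by
      have := sin_sq_add_cos_sq (sqrt E); linarith
    have ht : t ^ 2 = 1 - d ^ 2 := by
      have := sin_sq_add_cos_sq (sqrt (E - lam)); linarith
    have hhE : h E = (a ^ 2 + b ^ 2 - 2) / 4 := by
      rw [ha, hb, hh_def]
      field_simp
      ring
    show c ^ 2 + d ^ 2 + (c * d - 1 / 2 * (a + b) * s * t) ^ 2
        - 2 * c * d * (c * d - 1 / 2 * (a + b) * s * t) - 1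
        = s ^ 2 * t ^ 2 * h E
    rw [hhE]
    linear_combination ((a * b + 1) / 2) * (t ^ 2 * hs + (1 - c ^ 2) * ht)
      + ((1 - c ^ 2) * (1 - d ^ 2) / 2) * hab
  refine Tendsto.congr' (EventuallyEq.symm key) ?_
  apply squeeze_zero' (g := h)
  · filter_upwards [eventually_gt_atTop lam, eventually_gt_atTop 0] with E hElam hE0
    have hEl : (0:ℝ) < E - lam := by linarith
    have : 0 < h E := by rw [hh_def]; positivity
    positivity
  · filter_upwards [eventually_gt_atTop lam, eventually_gt_atTop 0] with E hElam hE0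
    have hEl : (0:ℝ) < E - lam := by linarith
    have h0 : 0 ≤ h E := by rw [hh_def]; positivity
    have h1 : sin (sqrt E) ^ 2 * sin (sqrt (E - lam)) ^ 2 ≤ 1 := by
      nlinarith [sin_sq_le_one (sqrt E), sin_sq_le_one (sqrt (E - lam)), sq_nonneg (sin (sqrt E)), sq_nonneg (sin (sqrt (E - lam)))]
    nlinarith [mul_nonneg (sq_nonneg (sin (sqrt E))) (sq_nonneg (sin (sqrt (E - lam))))]
  · exact hh
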